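/- Let λ and μ be partitions of n with ℓ(μ) = l, λ dominating μ, and suppose λ_1 > λ_2 = λ_3 = ... = λ_l (where λ_i = 0 for i > ℓ(λ)). Then K_{λμ} = 1. -/

import Mathlib

/-- A partition encoded as a weakly decreasing, finitely supported function `ℕ → ℕ`
(0-indexed: `l 0` is the first part). -/
def IsPartition (l : ℕ → ℕ) : Prop :=
  Antitone l ∧ ∃ N, ∀ i, N ≤ i → l i = 0

/-- The size (sum of the parts). -/
noncomputable def psize (l : ℕ → ℕ) : ℕ := ∑ᶠ i, l i

/-- Dominance order: every partial sum of `l` is at least that of `m`. -/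
def Dominates (l m : ℕ → ℕ) : Prop :=
  ∀ k, ∑ i ∈ Finset.range k, m i ≤ ∑ i ∈ Finset.range k, l i

/-- `l` has exactly `h` (nonzero) parts. -/
def PartLength (l : ℕ → ℕ) (h : ℕ) : Prop :=
  (∀ i, i < h → 0 < l i) ∧ ∀ i, h ≤ i → l i = 0

/-- A semistandard Young tableau of shape `l`: positive entries in the cells
`(i, j)` with `j < l i`, zero outside, rows weakly increasing, columns strictly
increasing. -/
def IsSSYT (l : ℕ → ℕ) (T : ℕ → ℕ → ℕ) : Prop :=
  (∀ i j, j < l i → 1 ≤ T i j) ∧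
  (∀ i j, l i ≤ j → T i j = 0) ∧
  (∀ i j k, j ≤ k → k < l i → T i j ≤ T i k) ∧
  (∀ i i' j, i < i' → j < l i' → T i j < T i' j)

/-- The number of cells of `T` (inside shape `l`) with entry `m + 1`. -/
noncomputable def entryCount (l : ℕ → ℕ) (T : ℕ → ℕ → ℕ) (m : ℕ) : ℕ :=
  Set.ncard {p : ℕ × ℕ | p.2 < l p.1 ∧ T p.1 p.2 = m + 1}

/-- `T` has weight `w`: the entry `m + 1` occurs `w m` times. -/
def HasWeight (l : ℕ → ℕ) (T : ℕ → ℕ → ℕ) (w : ℕ → ℕ) : Prop :=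
  ∀ m, entryCount l T m = w m

/-- The Kostka number: the number of semistandard Young tableaux of shape `l`
and weight `w`. -/
noncomputable def kostka (l w : ℕ → ℕ) : ℕ :=
  Set.ncard {T : ℕ → ℕ → ℕ | IsSSYT l T ∧ HasWeight l T w}



/-- Auxiliary: a downward-closed finset of naturals is an initial segment. -/
lemma kostka_dc (S : Finset ℕ) (h : ∀ j ∈ S, ∀ k, k ≤ j → k ∈ S) :
    S = Finset.range S.card := by
  have key : ∀ k, k ∈ S ↔ k < S.card := by
    intro k
    constructor
    · intro hk
      have hsub : Finset.range (k + 1) ⊆ S := by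
        intro x hx
        exact h k hk x (by simpa using Nat.lt_succ_iff.mp (Finset.mem_range.mp hx))
      have := Finset.card_le_card hsub
      simpa using this
    · intro hk
      by_contra hkn
      have hsub : S ⊆ Finset.range k := by
        intro j hj
        rcases lt_or_ge j k with hlt | hle
        · simpa using hlt
        · exact absurd (h j hj k hle) hkn
      have := Finset.card_le_card hsub
      simp at this
      omega
  ext k
  simp [key]

/-- Auxiliary: intermediate value for monotone ℕ-sequences. -/
lemma kostka_ex (g : ℕ → ℕ) (hg0 : g 0 = 0) :
    ∀ k j, j < g k → ∃ m, m < k ∧ g m ≤ j ∧ j < g (m + 1) := by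
  intro k
  induction k with
  | zero => intro j hj; omega
  | succ k ih =>
    intro j hj
    rcases le_or_gt (g k) j with hle | hlt
    · exact ⟨k, Nat.lt_succ_self k, hle, hj⟩
    · obtain ⟨m, hm, ha, hb⟩ := ih j hlt
      exact ⟨m, by omega, ha, hb⟩

/-- Cumulative boundaries for the row-0 entries of the canonical tableau. -/
def kostkaG (b : ℕ) (mu : ℕ → ℕ) (m : ℕ) : ℕ :=
  if m = 0 then 0 else b + ∑ i ∈ Finset.range m, (mu i - b)

/-- Row-0 entry of the canonical tableau. -/
def kostkaV (b l : ℕ) (mu : ℕ → ℕ) (j : ℕ) : ℕ :=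
  1 + ((Finset.Ico 1 l).filter (fun m => kostkaG b mu m ≤ j)).card

/-- The canonical (unique) SSYT. -/
def kostkaT (lam mu : ℕ → ℕ) (l : ℕ) (i j : ℕ) : ℕ :=
  if j < lam i then (if i = 0 then kostkaV (lam 1) l mu j else i + 1) else 0

theorem stmt3 (n l : ℕ) (lam mu : ℕ → ℕ)
    (hlp : IsPartition lam) (hln : psize lam = n)
    (hmp : IsPartition mu) (hmn : psize mu = n)
    (hml : PartLength mu l)
    (hd : Dominates lam mu)
    (h1 : lam 1 < lam 0)
    (h2 : ∀ i, 1 ≤ i → i < l → lam i = lam 1) :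
    kostka lam mu = 1 := by
  obtain ⟨hlam_anti, Nl, hNl⟩ := hlp
  obtain ⟨hmu_anti, -⟩ := hmp
  obtain ⟨hmu_pos, hmu_zero⟩ := hml
  set b := lam 1 with hbdef
  set a := lam 0 with hadef
  -- basic sums
  have hmusum : ∀ M, l ≤ M → ∑ i ∈ Finset.range M, mu i = n := by
    intro M hM
    have hsupp : Function.support mu ⊆ ↑(Finset.range M) := by
      intro x hx
      simp only [Function.mem_support] at hx
      simp only [Finset.coe_range, Set.mem_Iio]
      by_contra hc
      exact hx (hmu_zero x (by omega))
    rw [← hmn, psize, finsum_eq_sum_of_support_subset mu hsupp]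
  have hlamsum : ∀ M, Nl ≤ M → ∑ i ∈ Finset.range M, lam i = n := by
    intro M hM
    have hsupp : Function.support lam ⊆ ↑(Finset.range M) := by
      intro x hx
      simp only [Function.mem_support] at hx
      simp only [Finset.coe_range, Set.mem_Iio]
      by_contra hc
      exact hx (hNl x (by omega))
    rw [← hln, psize, finsum_eq_sum_of_support_subset lam hsupp]
  have hl1 : 1 ≤ l := by
    by_contra hc
    have hl0 : l = 0 := by omega
    have hn0 : n = 0 := by
      have := hmusum 0 (by omega)
      simpa using this.symm
    have hla : lam 0 ≤ n := by
      rw [← hlamsum (Nl + 1) (by omega)]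
      exact Finset.single_le_sum (f := lam) (fun i _ => Nat.zero_le _)
        (Finset.mem_range.mpr (by omega))
    omega
  -- lam vanishes from l on
  have hA : ∀ i, l ≤ i → lam i = 0 := by
    have hM : ∑ i ∈ Finset.range (max l Nl), lam i = n := hlamsum _ (le_max_right _ _)
    have hsplit : ∑ i ∈ Finset.range l, lam i
        + ∑ i ∈ Finset.Ico l (max l Nl), lam i = ∑ i ∈ Finset.range (max l Nl), lam i := by
      rw [Finset.range_eq_Ico, Finset.range_eq_Ico]
      exact Finset.sum_Ico_consecutive _ (Nat.zero_le _) (le_max_left _ _)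
    have hdl := hd l
    have hmul : ∑ i ∈ Finset.range l, mu i = n := hmusum l le_rfl
    have htail : ∑ i ∈ Finset.Ico l (max l Nl), lam i = 0 := by omega
    have hzero : ∀ i ∈ Finset.Ico l (max l Nl), lam i = 0 := by
      intro i hi
      exact Finset.sum_eq_zero_iff.mp htail i hi
    intro i hi
    rcases lt_or_ge i (max l Nl) with hlt | hle
    · exact hzero i (Finset.mem_Ico.mpr ⟨hi, hlt⟩)
    · exact hNl i (by omega)
  -- each part of mu is at least b
  have hbmu : ∀ m, m < l → b ≤ mu m := by
    have hlaml1 : b ≤ lam (l - 1) := by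
      rcases eq_or_lt_of_le hl1 with h | h
      · rw [hbdef, hadef] at *
        have : l - 1 = 0 := by omega
        rw [this]
        exact le_of_lt h1
      · rw [h2 (l - 1) (by omega) (by omega)]
    have hkey : lam (l - 1) ≤ mu (l - 1) := by
      have hdl := hd (l - 1)
      have hmul : ∑ i ∈ Finset.range l, mu i = n := hmusum l le_rfl
      have hlaml : ∑ i ∈ Finset.range l, lam i ≤ n := by
        rw [← hlamsum (max l Nl) (le_max_right _ _)]
        exact Finset.sum_le_sum_of_subset
          (Finset.range_subset_range.mpr (le_max_left _ _))
      have e1 : ∑ i ∈ Finset.range l, mu i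
          = ∑ i ∈ Finset.range (l - 1), mu i + mu (l - 1) := by
        have : l = (l - 1) + 1 := by omega
        rw [this, Finset.sum_range_succ]
        congr 1 <;> omega
      have e2 : ∑ i ∈ Finset.range l, lam i
          = ∑ i ∈ Finset.range (l - 1), lam i + lam (l - 1) := by
        have : l = (l - 1) + 1 := by omega
        rw [this, Finset.sum_range_succ]
        congr 1 <;> omega
      omega
    intro m hm
    exact le_trans hlaml1 (le_trans hkey (hmu_anti (by omega)))
  -- decomposition of range-l sums
  have hdec : ∀ f : ℕ → ℕ,
      f 0 + ∑ i ∈ Finset.Ico 1 l, f i = ∑ i ∈ Finset.range l, f i := by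
    intro f
    have h01 : ∑ i ∈ Finset.Ico 0 1, f i = f 0 := by simp
    rw [Finset.range_eq_Ico, ← Finset.sum_Ico_consecutive f (Nat.zero_le 1) hl1, h01]
  set g := kostkaG b mu with hgdef
  have hg0 : g 0 = 0 := by simp [hgdef, kostkaG]
  have hgsucc : ∀ m, 1 ≤ m → g (m + 1) = g m + (mu m - b) := by
    intro m hm
    simp only [hgdef, kostkaG, Nat.succ_ne_zero, if_false, Finset.sum_range_succ]
    have : m ≠ 0 := by omega
    simp [this]
    omega
  have hg1 : g 1 = mu 0 := by
    have hb0 : b ≤ mu 0 := hbmu 0 hl1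
    simp only [hgdef, kostkaG, if_neg one_ne_zero, Finset.sum_range_one]
    omega
  have hgmono : Monotone g := by
    apply monotone_nat_of_le_succ
    intro m
    rcases Nat.eq_zero_or_pos m with rfl | hm
    · rw [hg0]; exact Nat.zero_le _
    · rw [hgsucc m hm]; omega
  have hgl : g l = a := by
    have hbm : ∀ i ∈ Finset.range l, (mu i - b) + b = mu i := by
      intro i hi
      have := hbmu i (Finset.mem_range.mp hi)
      omega
    have e1 : ∑ i ∈ Finset.range l, (mu i - b) + ∑ i ∈ Finset.range l, b
        = ∑ i ∈ Finset.range l, mu i := by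
      rw [← Finset.sum_add_distrib]
      exact Finset.sum_congr rfl hbm
    have e2 : (b : ℕ) + ∑ i ∈ Finset.Ico 1 l, b = ∑ i ∈ Finset.range l, b := hdec (fun _ => b)
    have e3 : a + ∑ i ∈ Finset.Ico 1 l, b = ∑ i ∈ Finset.range l, lam i := by
      rw [← hdec lam]
      congr 1
      exact Finset.sum_congr rfl fun i hi => by
        rw [h2 i (Finset.mem_Ico.mp hi).1 (Finset.mem_Ico.mp hi).2]
    have e4 : ∑ i ∈ Finset.range l, lam i = n := by
      have hmul : ∑ i ∈ Finset.range l, mu i = n := hmusum l le_rfl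
      have hM : ∑ i ∈ Finset.range (max l Nl), lam i = n := hlamsum _ (le_max_right _ _)
      have hsplit : ∑ i ∈ Finset.range l, lam i
          + ∑ i ∈ Finset.Ico l (max l Nl), lam i
          = ∑ i ∈ Finset.range (max l Nl), lam i := by
        rw [Finset.range_eq_Ico, Finset.range_eq_Ico]
        exact Finset.sum_Ico_consecutive _ (Nat.zero_le _) (le_max_left _ _)
      have : ∑ i ∈ Finset.Ico l (max l Nl), lam i = 0 :=
        Finset.sum_eq_zero fun i hi => hA i (Finset.mem_Ico.mp hi).1
      omega
    have e5 : ∑ i ∈ Finset.range l, mu i = n := hmusum l le_rfl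
    have hgle : g l = b + ∑ i ∈ Finset.range l, (mu i - b) := by
      simp only [hgdef, kostkaG]
      have : l ≠ 0 := by omega
      simp [this]
    omega
  set v := kostkaV b l mu with hvdef
  have hvchar : ∀ m j, m < l → g m ≤ j → j < g (m + 1) → v j = m + 1 := by
    intro m j hm hgm hgm1
    have hfilter : (Finset.Ico 1 l).filter (fun m' => kostkaG b mu m' ≤ j)
        = Finset.Ico 1 (m + 1) := by
      ext m'
      simp only [Finset.mem_filter, Finset.mem_Ico]
      constructor
      · rintro ⟨⟨hm1, hm2⟩, hm3⟩
        refine ⟨hm1, ?_⟩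
        by_contra hc
        have : g (m + 1) ≤ g m' := hgmono (by omega)
        have : kostkaG b mu m' = g m' := rfl
        omega
      · rintro ⟨hm1, hm2⟩
        refine ⟨⟨hm1, by omega⟩, ?_⟩
        have : g m' ≤ g m := hgmono (by omega)
        show kostkaG b mu m' ≤ j
        have hgg : kostkaG b mu m' = g m' := rfl
        omega
    simp only [hvdef, kostkaV, hfilter, Nat.card_Ico]
    omega
  have hvle : ∀ j, v j ≤ l := by
    intro j
    have hcard : ((Finset.Ico 1 l).filter (fun m => kostkaG b mu m ≤ j)).card
        ≤ (Finset.Ico 1 l).card := Finset.card_le_card (Finset.filter_subset _ _)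
    simp only [Nat.card_Ico] at hcard
    simp only [hvdef, kostkaV]
    omega
  have hvmono : ∀ j j', j ≤ j' → v j ≤ v j' := by
    intro j j' hjj'
    simp only [hvdef, kostkaV]
    have : ((Finset.Ico 1 l).filter (fun m => kostkaG b mu m ≤ j))
        ⊆ ((Finset.Ico 1 l).filter (fun m => kostkaG b mu m ≤ j')) := by
      intro m hm
      simp only [Finset.mem_filter] at hm ⊢
      exact ⟨hm.1, le_trans hm.2 hjj'⟩
    have := Finset.card_le_card this
    omega
  have hv1 : ∀ j, j < mu 0 → v j = 1 := by
    intro j hj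
    exact hvchar 0 j hl1 (by omega) (by rw [hg1]; exact hj)
  have hvex : ∀ j, j < a → ∃ m, m < l ∧ g m ≤ j ∧ j < g (m + 1) := by
    intro j hj
    exact kostka_ex g hg0 l j (by rw [hgl]; exact hj)
  have hrow0 : ∀ m j, m < l → ((j < a ∧ v j = m + 1) ↔ (g m ≤ j ∧ j < g (m + 1))) := by
    intro m j hm
    constructor
    · rintro ⟨hja, hvj⟩
      obtain ⟨m', hm', hg1', hg2'⟩ := hvex j hja
      have : v j = m' + 1 := hvchar m' j hm' hg1' hg2'
      have : m' = m := by omega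
      subst this
      exact ⟨hg1', hg2'⟩
    · rintro ⟨hg1', hg2'⟩
      have hja : j < a := by
        have : g (m + 1) ≤ g l := hgmono (by omega)
        omega
      exact ⟨hja, hvchar m j hm hg1' hg2'⟩
  set T0 := kostkaT lam mu l with hT0def
  have hT00 : ∀ j, j < lam 0 → T0 0 j = v j := by
    intro j hj
    simp [hT0def, kostkaT, hj, hvdef, hbdef]
  have hT0i : ∀ i j, 1 ≤ i → j < lam i → T0 i j = i + 1 := by
    intro i j hi hj
    have : i ≠ 0 := by omega
    simp [hT0def, kostkaT, hj, this]
  have hT0out : ∀ i j, lam i ≤ j → T0 i j = 0 := by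
    intro i j hj
    simp [hT0def, kostkaT]
    omega
  have hshape : ∀ i j, j < lam i → i < l ∧ j < a := by
    intro i j hj
    constructor
    · by_contra hc
      rw [hA i (by omega)] at hj
      omega
    · exact lt_of_lt_of_le hj (hlam_anti (Nat.zero_le i))
  -- T0 is an SSYT
  have hT0ssyt : IsSSYT lam T0 := by
    refine ⟨?_, hT0out, ?_, ?_⟩
    · intro i j hj
      rcases Nat.eq_zero_or_pos i with rfl | hi
      · rw [hT00 j hj]
        simp [hvdef, kostkaV]
      · rw [hT0i i j hi hj]
        omega
    · intro i j k hjk hk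
      have hj : j < lam i := by omega
      rcases Nat.eq_zero_or_pos i with rfl | hi
      · rw [hT00 j hj, hT00 k hk]
        exact hvmono j k hjk
      · rw [hT0i i j hi hj, hT0i i k hi hk]
    · intro i i' j hii' hj
      have hi'l : i' < l := (hshape i' j hj).1
      have hj' : j < lam i := lt_of_lt_of_le hj (hlam_anti (le_of_lt hii'))
      have hi'1 : 1 ≤ i' := by omega
      rw [hT0i i' j hi'1 hj]
      rcases Nat.eq_zero_or_pos i with rfl | hi
      · rw [hT00 j hj']
        have hlami' : lam i' = b := h2 i' hi'1 hi'l
        have : j < mu 0 := by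
          have := hbmu 0 hl1
          omega
        rw [hv1 j this]
        omega
      · rw [hT0i i j hi hj']
        omega
  -- finiteness of entry sets
  have hfin : ∀ (T : ℕ → ℕ → ℕ) (m : ℕ),
      {p : ℕ × ℕ | p.2 < lam p.1 ∧ T p.1 p.2 = m + 1}.Finite := by
    intro T m
    apply Set.Finite.subset (Finset.range l ×ˢ Finset.range a).finite_toSet
    rintro ⟨i, j⟩ ⟨hj, -⟩
    obtain ⟨hil, hja⟩ := hshape i j hj
    simp [hil, hja]
  -- T0 has weight mu
  have hT0w : HasWeight lam T0 mu := by
    intro m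
    unfold entryCount
    rcases lt_or_ge m l with hml' | hml'
    · rcases Nat.eq_zero_or_pos m with rfl | hm1
      · have hset : {p : ℕ × ℕ | p.2 < lam p.1 ∧ T0 p.1 p.2 = 0 + 1}
            = ↑(({0} : Finset ℕ) ×ˢ Finset.range (mu 0)) := by
          ext ⟨i, j⟩
          simp only [Set.mem_setOf_eq, Finset.coe_product, Set.mem_prod,
            Finset.coe_singleton, Set.mem_singleton_iff, Finset.coe_range, Set.mem_Iio]
          constructor
          · rintro ⟨hj, hT⟩
            rcases Nat.eq_zero_or_pos i with rfl | hi
            · rw [hT00 j hj] at hT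
              have hja : j < a := (hshape 0 j hj).2
              have := (hrow0 0 j hl1).mp ⟨hja, hT⟩
              rw [hg1] at this
              exact ⟨rfl, by omega⟩
            · rw [hT0i i j hi hj] at hT
              omega
          · rintro ⟨rfl, hj⟩
            have hja : j < a := by
              have h' := hgmono hl1
              rw [hg1] at h'
              have h'' := hgl
              omega
            have hj' : j < lam 0 := hja
            rw [hT00 j hj']
            exact ⟨hj', hv1 j hj⟩
        rw [hset, Set.ncard_coe_finset]
        simp
      · have hlamm : lam m = b := h2 m hm1 hml'
        have hset : {p : ℕ × ℕ | p.2 < lam p.1 ∧ T0 p.1 p.2 = m + 1}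
            = ↑((({m} : Finset ℕ) ×ˢ Finset.range b)
              ∪ (({0} : Finset ℕ) ×ˢ Finset.Ico (g m) (g (m + 1)))) := by
          ext ⟨i, j⟩
          simp only [Set.mem_setOf_eq, Finset.coe_union, Set.mem_union,
            Finset.coe_product, Set.mem_prod, Finset.coe_singleton,
            Set.mem_singleton_iff, Finset.coe_range, Set.mem_Iio,
            Finset.coe_Ico, Set.mem_Ico]
          constructor
          · rintro ⟨hj, hT⟩
            rcases Nat.eq_zero_or_pos i with rfl | hi
            · rw [hT00 j hj] at hT
              have hja : j < a := (hshape 0 j hj).2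
              exact Or.inr ⟨rfl, (hrow0 m j hml').mp ⟨hja, hT⟩⟩
            · rw [hT0i i j hi hj] at hT
              have : i = m := by omega
              subst this
              exact Or.inl ⟨rfl, by rw [hlamm] at hj; exact hj⟩
          · rintro (⟨hi, hj⟩ | ⟨hi, hj⟩)
            · have hj' : j < lam i := by rw [hi, hlamm]; exact hj
              refine ⟨hj', ?_⟩
              rw [hT0i i j (by omega) hj', hi]
            · have h' := (hrow0 m j hml').mpr hj
              have hj0 : j < lam 0 := h'.1
              refine ⟨by rw [hi]; exact hj0, ?_⟩
              rw [hi, hT00 j hj0]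
              exact h'.2
        rw [hset, Set.ncard_coe_finset]
        rw [Finset.card_union_of_disjoint]
        · simp only [Finset.card_product, Finset.card_singleton, Finset.card_range,
            Nat.card_Ico, one_mul]
          rw [hgsucc m hm1]
          have := hbmu m hml'
          omega
        · simp only [Finset.disjoint_left]
          rintro ⟨i, j⟩ hp hq
          simp only [Finset.mem_product, Finset.mem_singleton] at hp hq
          omega
    · have hset : {p : ℕ × ℕ | p.2 < lam p.1 ∧ T0 p.1 p.2 = m + 1} = ∅ := by
        ext ⟨i, j⟩
        simp only [Set.mem_setOf_eq, Set.mem_empty_iff_false, iff_false, not_and]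
        intro hj hT
        rcases Nat.eq_zero_or_pos i with rfl | hi
        · rw [hT00 j hj] at hT
          have := hvle j
          omega
        · rw [hT0i i j hi hj] at hT
          have : i = m := by omega
          have := (hshape i j hj).1
          omega
      rw [hset]
      simp [hmu_zero m hml']
  -- the set of SSYT of shape lam and weight mu is {T0}
  have hset : {T : ℕ → ℕ → ℕ | IsSSYT lam T ∧ HasWeight lam T mu} = {T0} := by
    ext T
    simp only [Set.mem_setOf_eq, Set.mem_singleton_iff]
    constructor
    · rintro ⟨⟨hpos, hout, hrow, hcol⟩, hw⟩
      -- lower bounds on entries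
      have hge : ∀ i j, j < lam i → i + 1 ≤ T i j := by
        intro i
        induction i with
        | zero => intro j hj; exact hpos 0 j hj
        | succ i ih =>
          intro j hj
          have hj' : j < lam i := lt_of_lt_of_le hj (hlam_anti (Nat.le_succ i))
          have h3 := hcol i (i + 1) j (Nat.lt_succ_self i) hj
          have h4 := ih j hj'
          omega
      -- upper bound: entries at most l
      have hle_l : ∀ i j, j < lam i → T i j ≤ l := by
        intro i j hj
        by_contra hc
        push_neg at hc
        set m := T i j - 1 with hm
        have hm1 : T i j = m + 1 := by
          have := hpos i j hj
          omega
        have hml2 : l ≤ m := by omega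
        have h0 : entryCount lam T m = mu m := hw m
        rw [hmu_zero m hml2] at h0
        unfold entryCount at h0
        have hempty := (Set.ncard_eq_zero (hfin T m)).mp h0
        have : (i, j) ∈ {p : ℕ × ℕ | p.2 < lam p.1 ∧ T p.1 p.2 = m + 1} := ⟨hj, hm1⟩
        rw [hempty] at this
        exact this
      -- columns are forced
      have hcolfix : ∀ i j, i < l → j < b → T i j = i + 1 := by
        intro i j hi hjb
        have hl2 : 2 ≤ l := by
          by_contra hc
          have : l = 1 := by omega
          have : b = 0 := hA 1 (by omega)
          omega
        have hstep : ∀ d i₀, (∀ j₀, j₀ < lam (i₀ + d) → T i₀ j₀ + d ≤ T (i₀ + d) j₀) := by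
          intro d
          induction d with
          | zero => intro i₀ j₀ hj₀; simp
          | succ d ih =>
            intro i₀ j₀ hj₀
            have heq : i₀ + (d + 1) = i₀ + d + 1 := by omega
            rw [heq] at hj₀
            have hj' : j₀ < lam (i₀ + d) :=
              lt_of_lt_of_le hj₀ (hlam_anti (by omega))
            have h3 := hcol (i₀ + d) (i₀ + d + 1) j₀ (by omega) hj₀
            have h4 := ih i₀ j₀ hj'
            rw [heq]
            omega
        have hlaml1 : lam (l - 1) = b := h2 (l - 1) (by omega) (by omega)
        have hjl1 : j < lam (l - 1) := by omega
        have h5 : T i j + (l - 1 - i) ≤ T (l - 1) j := by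
          have := hstep (l - 1 - i) i
          have heq : i + (l - 1 - i) = l - 1 := by omega
          rw [heq] at this
          exact this j hjl1
        have h6 : T (l - 1) j ≤ l := hle_l (l - 1) j hjl1
        have h7 : i + 1 ≤ T i j := by
          apply hge
          have : b ≤ lam i := by
            rcases Nat.eq_zero_or_pos i with rfl | hi0
            · omega
            · rw [h2 i hi0 hi]
          omega
        omega
      -- row-0 value counts
      set R : ℕ → Finset ℕ :=
        fun m => (Finset.range a).filter (fun j => T 0 j = m + 1) with hRdef
      have hRcard0 : (R 0).card = mu 0 := by
        have h0 := hw 0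
        unfold entryCount at h0
        have hseteq : {p : ℕ × ℕ | p.2 < lam p.1 ∧ T p.1 p.2 = 0 + 1}
            = ↑(({0} : Finset ℕ) ×ˢ R 0) := by
          ext ⟨i, j⟩
          simp only [Set.mem_setOf_eq, Finset.coe_product, Set.mem_prod,
            Finset.coe_singleton, Set.mem_singleton_iff, hRdef, Finset.coe_filter,
            Set.mem_setOf_eq, Finset.mem_range]
          constructor
          · rintro ⟨hj, hT⟩
            rcases Nat.eq_zero_or_pos i with rfl | hi
            · exact ⟨rfl, (hshape 0 j hj).2, hT⟩
            · have := hge i j hj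
              omega
          · rintro ⟨rfl, hja, hT⟩
            exact ⟨hja, hT⟩
        rw [hseteq, Set.ncard_coe_finset] at h0
        simpa using h0
      have hRcard : ∀ m, 1 ≤ m → m < l → (R m).card + b = mu m := by
        intro m hm1 hml'
        have h0 := hw m
        unfold entryCount at h0
        have hlamm : lam m = b := h2 m hm1 hml'
        have hseteq : {p : ℕ × ℕ | p.2 < lam p.1 ∧ T p.1 p.2 = m + 1}
            = ↑((({m} : Finset ℕ) ×ˢ Finset.range b) ∪ (({0} : Finset ℕ) ×ˢ R m)) := by
          ext ⟨i, j⟩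
          simp only [Set.mem_setOf_eq, Finset.coe_union, Set.mem_union,
            Finset.coe_product, Set.mem_prod, Finset.coe_singleton,
            Set.mem_singleton_iff, Finset.coe_range, Set.mem_Iio, hRdef,
            Finset.coe_filter, Set.mem_setOf_eq, Finset.mem_range]
          constructor
          · rintro ⟨hj, hT⟩
            rcases Nat.eq_zero_or_pos i with rfl | hi
            · exact Or.inr ⟨rfl, (hshape 0 j hj).2, hT⟩
            · have hil : i < l := (hshape i j hj).1
              have hjb : j < b := by
                rw [h2 i hi hil] at hj
                exact hj
              have := hcolfix i j hil hjb
              have : i = m := by omega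
              exact Or.inl ⟨this, hjb⟩
          · rintro (⟨hi, hj⟩ | ⟨hi, hja, hT⟩)
            · have hj' : j < lam i := by rw [hi, hlamm]; exact hj
              refine ⟨hj', ?_⟩
              rw [hcolfix i j (by omega) hj, hi]
            · refine ⟨by rw [hi]; exact hja, by rw [hi]; exact hT⟩
        rw [hseteq, Set.ncard_coe_finset, Finset.card_union_of_disjoint] at h0
        · simp only [Finset.card_product, Finset.card_singleton, Finset.card_range,
            one_mul] at h0
          omega
        · simp only [Finset.disjoint_left]
          rintro ⟨i, j⟩ hp hq
          simp only [Finset.mem_product, Finset.mem_singleton] at hp hq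
          omega
      have hRempty : ∀ m, l ≤ m → R m = ∅ := by
        intro m hm
        rw [hRdef]
        apply Finset.filter_false_of_mem
        intro j hj
        have hja : j < a := Finset.mem_range.mp hj
        have := hle_l 0 j hja
        omega
      -- cumulative counts
      set F : ℕ → Finset ℕ :=
        fun m => (Finset.range a).filter (fun j => T 0 j ≤ m) with hFdef
      have hF0 : F 0 = ∅ := by
        rw [hFdef]
        apply Finset.filter_false_of_mem
        intro j hj
        have := hpos 0 j (Finset.mem_range.mp hj)
        omega
      have hFsucc : ∀ m, F (m + 1) = F m ∪ R m := by
        intro m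
        ext j
        simp only [hFdef, hRdef, Finset.mem_union, Finset.mem_filter, Finset.mem_range]
        omega
      have hFdisj : ∀ m, Disjoint (F m) (R m) := by
        intro m
        simp only [Finset.disjoint_left, hFdef, hRdef, Finset.mem_filter, Finset.mem_range]
        intro j hp hq
        omega
      have hFcard : ∀ m, m ≤ l → (F m).card = g m := by
        intro m
        induction m with
        | zero => intro _; rw [hF0, hg0]; simp
        | succ m ih =>
          intro hm
          rw [hFsucc m, Finset.card_union_of_disjoint (hFdisj m), ih (by omega)]
          rcases Nat.eq_zero_or_pos m with rfl | hm1
          · rw [hg0, hRcard0]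
            simpa using hg1.symm
          · rw [hgsucc m hm1]
            have := hRcard m hm1 (by omega)
            have := hbmu m (by omega)
            omega
      have hFdc : ∀ m, F m = Finset.range ((F m).card) := by
        intro m
        apply kostka_dc
        intro j hj k hk
        simp only [hFdef, Finset.mem_filter, Finset.mem_range] at hj ⊢
        obtain ⟨hja, hTj⟩ := hj
        refine ⟨by omega, le_trans ?_ hTj⟩
        exact hrow 0 k j hk hja
      -- row 0 is forced
      have hTrow0 : ∀ j, j < a → T 0 j = v j := by
        intro j hja
        obtain ⟨m, hm, hgm, hgm1⟩ := hvex j hja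
        have hjF : j ∈ F (m + 1) := by
          rw [hFdc (m + 1), hFcard (m + 1) (by omega)]
          simp only [Finset.mem_range]
          exact hgm1
        have hjnF : j ∉ F m := by
          rw [hFdc m, hFcard m (by omega)]
          simp only [Finset.mem_range]
          omega
        simp only [hFdef, Finset.mem_filter, Finset.mem_range] at hjF hjnF
        have hT : T 0 j = m + 1 := by
          have := hjF.2
          have : ¬ (T 0 j ≤ m) := fun hcon => hjnF ⟨hja, hcon⟩
          omega
        rw [hT, hvchar m j hm hgm hgm1]
      -- conclude T = T0
      funext i j
      rcases lt_or_ge j (lam i) with hj | hj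
      · rcases Nat.eq_zero_or_pos i with rfl | hi
        · rw [hT00 j hj]
          exact hTrow0 j (hshape 0 j hj).2
        · rw [hT0i i j hi hj]
          have hil : i < l := (hshape i j hj).1
          have hjb : j < b := by
            rw [h2 i hi hil] at hj
            exact hj
          exact hcolfix i j hil hjb
      · rw [hout i j hj, hT0out i j hj]
    · rintro rfl
      exact ⟨hT0ssyt, hT0w⟩
  unfold kostka
  rw [hset, Set.ncard_singleton]
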